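/- For every integer D ≥ 3 there exist constants A ≥ 1 and B ≥ 0 (depending only on D) such that every finite connected simple graph G in which every vertex has degree at most D is (A,B)-quasi-isometric to some finite connected simple graph H in which every vertex has degree exactly 3. -/

import Mathlib

namespace TrivalentAux

variable {V : Type} (G : SimpleGraph V) {D : ℕ} (ι : V → V → Fin D)

/-- Adjacency of the cubic graph: each vertex `v` of `G` is replaced by a cycle of
length `2*D`; slots `0..D-1` are ports, slot `i` is paired with `D+i`. -/
def HAdj (p q : V × Fin (2*D)) : Prop :=
  (p.1 = q.1 ∧ (p.2.val + 1 = q.2.val ∨ q.2.val + 1 = p.2.val ∨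
      (p.2.val = 0 ∧ q.2.val + 1 = 2*D) ∨ (q.2.val = 0 ∧ p.2.val + 1 = 2*D)))
  ∨ (p.1 = q.1 ∧ (p.2.val + D = q.2.val ∨ q.2.val + D = p.2.val) ∧
      ¬ ∃ u, G.Adj p.1 u ∧ (ι p.1 u).val = min p.2.val q.2.val)
  ∨ (G.Adj p.1 q.1 ∧
      ((p.2.val = (ι p.1 q.1).val ∧ q.2.val = (ι q.1 p.1).val) ∨
       (p.2.val = D + (ι p.1 q.1).val ∧ q.2.val = D + (ι q.1 p.1).val)))

/-- The cubic graph. -/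
def HG : SimpleGraph (V × Fin (2*D)) where
  Adj p q := HAdj G ι p q
  symm := by
    constructor
    rintro p q (⟨h1, h2⟩ | ⟨h1, h2, h3⟩ | ⟨h1, h2⟩)
    · exact Or.inl ⟨h1.symm, by tauto⟩
    · refine Or.inr (Or.inl ⟨h1.symm, by tauto, ?_⟩)
      rw [← h1, Nat.min_comm]; exact h3
    · exact Or.inr (Or.inr ⟨h1.symm, by tauto⟩)
  loopless := by
    constructor
    rintro ⟨v, a⟩ (⟨h1, h2⟩ | ⟨h1, h2, h3⟩ | ⟨h1, h2⟩)
    · have := a.isLt; omega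
    · omega
    · exact G.loopless.irrefl v h1

end TrivalentAux

namespace TrivalentAux

variable {V : Type} {G : SimpleGraph V} {D : ℕ} {ι : V → V → Fin D}
set_option maxHeartbeats 1000000 in
lemma degree_three (hι : ∀ v u u', G.Adj v u → G.Adj v u' → ι v u = ι v u' → u = u')
    (hD : 3 ≤ D) (p : V × Fin (2*D)) :
    ((HG G ι).neighborSet p).ncard = 3 := by
  obtain ⟨v, a⟩ := p
  have ha := a.isLt
  set nxt : Fin (2*D) := ⟨if a.val + 1 = 2*D then 0 else a.val + 1, by split <;> omega⟩ with hnxt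
  set prv : Fin (2*D) := ⟨if a.val = 0 then 2*D - 1 else a.val - 1, by split <;> omega⟩ with hprv
  set s : ℕ := if a.val < D then a.val else a.val - D with hs
  have hnv : (a.val + 1 = 2*D ∧ nxt.val = 0) ∨ (a.val + 1 ≠ 2*D ∧ nxt.val = a.val + 1) := by
    rw [hnxt]; simp only; split
    · exact Or.inl ⟨‹_›, rfl⟩
    · exact Or.inr ⟨‹_›, rfl⟩
  have hpv : (a.val = 0 ∧ prv.val = 2*D - 1) ∨ (a.val ≠ 0 ∧ prv.val = a.val - 1) := by
    rw [hprv]; simp only; split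
    · exact Or.inl ⟨‹_›, rfl⟩
    · exact Or.inr ⟨‹_›, rfl⟩
  have hs' : (a.val < D ∧ s = a.val) ∨ (¬ a.val < D ∧ s = a.val - D) := by
    rw [hs]; split
    · exact Or.inl ⟨‹_›, rfl⟩
    · exact Or.inr ⟨‹_›, rfl⟩
  clear_value nxt prv s
  rw [Set.ncard_eq_three]
  by_cases hused : ∃ u, G.Adj v u ∧ (ι v u).val = s
  · -- port case
    obtain ⟨u, huv, hiu⟩ := hused
    have hiul := (ι u v).isLt
    have hivl := (ι v u).isLt
    set e : Fin (2*D) := ⟨if a.val < D then (ι u v).val else D + (ι u v).val,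
      by split <;> omega⟩ with he
    have hev : (a.val < D ∧ e.val = (ι u v).val) ∨ (¬ a.val < D ∧ e.val = D + (ι u v).val) := by
      rw [he]; simp only; split
      · exact Or.inl ⟨‹_›, rfl⟩
      · exact Or.inr ⟨‹_›, rfl⟩
    clear_value e
    refine ⟨(v, nxt), (v, prv), (u, e), ?_, ?_, ?_, ?_⟩
    · intro h
      simp only [Prod.mk.injEq, Fin.ext_iff] at h
      rcases hnv with ⟨h1,h2⟩|⟨h1,h2⟩ <;> rcases hpv with ⟨h3,h4⟩|⟨h3,h4⟩ <;> omega
    · intro h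
      simp only [Prod.mk.injEq] at h
      exact G.ne_of_adj huv h.1
    · intro h
      simp only [Prod.mk.injEq] at h
      exact G.ne_of_adj huv h.1
    · ext ⟨w, b⟩
      simp only [SimpleGraph.mem_neighborSet, HG, HAdj, Set.mem_insert_iff,
        Set.mem_singleton_iff, Prod.mk.injEq, Fin.ext_iff]
      have hb := b.isLt
      constructor
      · rintro (⟨h1, h2⟩ | ⟨h1, h2, h3⟩ | ⟨h1, h2⟩)
        · subst h1
          rcases h2 with h | h | ⟨h, h'⟩ | ⟨h, h'⟩
          · exact Or.inl ⟨rfl, by rcases hnv with ⟨h1,h2⟩|⟨h1,h2⟩ <;> omega⟩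
          · exact Or.inr (Or.inl ⟨rfl, by rcases hpv with ⟨h1,h2⟩|⟨h1,h2⟩ <;> omega⟩)
          · exact Or.inr (Or.inl ⟨rfl, by rcases hpv with ⟨h1,h2⟩|⟨h1,h2⟩ <;> omega⟩)
          · exact Or.inl ⟨rfl, by rcases hnv with ⟨h1,h2⟩|⟨h1,h2⟩ <;> omega⟩
        · refine absurd ⟨u, huv, ?_⟩ h3
          rcases hs' with ⟨h4,h5⟩|⟨h4,h5⟩ <;> omega
        · have hwl := (ι v w).isLt
          have hwu : w = u := by
            apply hι v w u h1 huv
            refine Fin.ext ?_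
            rcases h2 with ⟨h, -⟩ | ⟨h, -⟩ <;> rcases hs' with ⟨h3,h4⟩|⟨h3,h4⟩ <;> omega
          subst hwu
          refine Or.inr (Or.inr ⟨rfl, ?_⟩)
          rcases h2 with ⟨h, h'⟩ | ⟨h, h'⟩ <;> rcases hev with ⟨h3,h4⟩|⟨h3,h4⟩ <;>
            rcases hs' with ⟨h5,h6⟩|⟨h5,h6⟩ <;> omega
      · rintro (⟨h1, h2⟩ | ⟨h1, h2⟩ | ⟨h1, h2⟩)
        · subst h1
          refine Or.inl ⟨rfl, ?_⟩
          rcases hnv with ⟨h3,h4⟩|⟨h3,h4⟩ <;> omega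
        · subst h1
          refine Or.inl ⟨rfl, ?_⟩
          rcases hpv with ⟨h3,h4⟩|⟨h3,h4⟩ <;> omega
        · subst h1
          refine Or.inr (Or.inr ⟨huv, ?_⟩)
          rcases hev with ⟨h3,h4⟩|⟨h3,h4⟩ <;> rcases hs' with ⟨h5,h6⟩|⟨h5,h6⟩ <;> omega
  · -- chord case
    set e : Fin (2*D) := ⟨if a.val < D then a.val + D else a.val - D, by split <;> omega⟩ with he
    have hev : (a.val < D ∧ e.val = a.val + D) ∨ (¬ a.val < D ∧ e.val = a.val - D) := by
      rw [he]; simp only; split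
      · exact Or.inl ⟨‹_›, rfl⟩
      · exact Or.inr ⟨‹_›, rfl⟩
    clear_value e
    refine ⟨(v, nxt), (v, prv), (v, e), ?_, ?_, ?_, ?_⟩
    · intro h
      simp only [Prod.mk.injEq, Fin.ext_iff] at h
      rcases hnv with ⟨h1,h2⟩|⟨h1,h2⟩ <;> rcases hpv with ⟨h3,h4⟩|⟨h3,h4⟩ <;> omega
    · intro h
      simp only [Prod.mk.injEq, Fin.ext_iff] at h
      rcases hnv with ⟨h1,h2⟩|⟨h1,h2⟩ <;> rcases hev with ⟨h3,h4⟩|⟨h3,h4⟩ <;> omega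
    · intro h
      simp only [Prod.mk.injEq, Fin.ext_iff] at h
      rcases hpv with ⟨h1,h2⟩|⟨h1,h2⟩ <;> rcases hev with ⟨h3,h4⟩|⟨h3,h4⟩ <;> omega
    · ext ⟨w, b⟩
      simp only [SimpleGraph.mem_neighborSet, HG, HAdj, Set.mem_insert_iff,
        Set.mem_singleton_iff, Prod.mk.injEq, Fin.ext_iff]
      have hb := b.isLt
      constructor
      · rintro (⟨h1, h2⟩ | ⟨h1, h2, h3⟩ | ⟨h1, h2⟩)
        · subst h1
          rcases h2 with h | h | ⟨h, h'⟩ | ⟨h, h'⟩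
          · exact Or.inl ⟨rfl, by rcases hnv with ⟨h1,h2⟩|⟨h1,h2⟩ <;> omega⟩
          · exact Or.inr (Or.inl ⟨rfl, by rcases hpv with ⟨h1,h2⟩|⟨h1,h2⟩ <;> omega⟩)
          · exact Or.inr (Or.inl ⟨rfl, by rcases hpv with ⟨h1,h2⟩|⟨h1,h2⟩ <;> omega⟩)
          · exact Or.inl ⟨rfl, by rcases hnv with ⟨h1,h2⟩|⟨h1,h2⟩ <;> omega⟩
        · subst h1
          refine Or.inr (Or.inr ⟨rfl, ?_⟩)
          rcases h2 with h | h <;> rcases hev with ⟨h3,h4⟩|⟨h3,h4⟩ <;> omega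
        · exfalso
          have hwl := (ι v w).isLt
          apply hused
          refine ⟨w, h1, ?_⟩
          rcases h2 with ⟨h, -⟩ | ⟨h, -⟩ <;> rcases hs' with ⟨h3,h4⟩|⟨h3,h4⟩ <;> omega
      · rintro (⟨h1, h2⟩ | ⟨h1, h2⟩ | ⟨h1, h2⟩)
        · subst h1
          refine Or.inl ⟨rfl, ?_⟩
          rcases hnv with ⟨h3,h4⟩|⟨h3,h4⟩ <;> omega
        · subst h1
          refine Or.inl ⟨rfl, ?_⟩
          rcases hpv with ⟨h3,h4⟩|⟨h3,h4⟩ <;> omega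
        · subst h1
          refine Or.inr (Or.inl ⟨rfl, ?_, ?_⟩)
          · rcases hev with ⟨h3,h4⟩|⟨h3,h4⟩ <;> omega
          · rintro ⟨u', hu', hιu'⟩
            apply hused
            refine ⟨u', hu', ?_⟩
            have hwl := (ι w u').isLt
            rcases hev with ⟨h3,h4⟩|⟨h3,h4⟩ <;> rcases hs' with ⟨h5,h6⟩|⟨h5,h6⟩ <;> omega

end TrivalentAux

namespace TrivalentAux

section Walks

variable {V : Type} {G : SimpleGraph V} {D : ℕ} {ι : V → V → Fin D}

lemma proj (hG : G.Connected) {p q : V × Fin (2*D)} (w : (HG G ι).Walk p q) :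
    G.dist p.1 q.1 ≤ w.length := by
  induction w with
  | nil => simp
  | @cons p r q h w ih =>
    rw [SimpleGraph.Walk.length_cons]
    rcases h with ⟨h1, -⟩ | ⟨h1, -, -⟩ | ⟨h1, -⟩
    · rw [h1]; omega
    · rw [h1]; omega
    · have tri := hG.dist_triangle (u := p.1) (v := r.1) (w := q.1)
      have h2 : G.dist p.1 r.1 ≤ 1 :=
        SimpleGraph.dist_le (SimpleGraph.Walk.cons h1 SimpleGraph.Walk.nil)
      omega

lemma walk0 (hD : 3 ≤ D) (v : V) :
    ∀ (j : ℕ) (hj : j < 2*D),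
      ∃ w : (HG G ι).Walk (v, ⟨0, by omega⟩) (v, ⟨j, hj⟩), w.length ≤ j := by
  intro j
  induction j with
  | zero => intro hj; exact ⟨SimpleGraph.Walk.nil, by simp⟩
  | succ j ih =>
    intro hj
    obtain ⟨w, hw⟩ := ih (by omega)
    have hadj : (HG G ι).Adj (v, ⟨j, by omega⟩) (v, ⟨j+1, hj⟩) := by
      show HAdj G ι _ _
      unfold HAdj
      exact Or.inl ⟨rfl, Or.inl rfl⟩
    refine ⟨w.concat hadj, ?_⟩
    rw [SimpleGraph.Walk.length_concat]
    omega

lemma gadget (hD : 3 ≤ D) (v : V) (b : Fin (2*D)) :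
    ∃ w : (HG G ι).Walk (v, ⟨0, by omega⟩) (v, b), w.length ≤ 2*D := by
  obtain ⟨w, hw⟩ := walk0 (ι := ι) hD v b.val b.isLt
  refine ⟨w.copy rfl (by rw [Fin.eta]), ?_⟩
  rw [SimpleGraph.Walk.length_copy]
  exact le_trans hw (by omega)

lemma edge_walk (hD : 3 ≤ D) {v u : V} (h : G.Adj v u) :
    ∃ w : (HG G ι).Walk (v, ⟨0, by omega⟩) (u, ⟨0, by omega⟩), w.length ≤ 4*D+1 := by
  have h1 := (ι v u).isLt
  have h2 := (ι u v).isLt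
  obtain ⟨w1, hw1⟩ := gadget (ι := ι) hD v ⟨(ι v u).val, by omega⟩
  obtain ⟨w2, hw2⟩ := gadget (ι := ι) hD u ⟨(ι u v).val, by omega⟩
  have hadj : (HG G ι).Adj (v, ⟨(ι v u).val, by omega⟩) (u, ⟨(ι u v).val, by omega⟩) := by
    show HAdj G ι _ _
    unfold HAdj
    exact Or.inr (Or.inr ⟨h, Or.inl ⟨rfl, rfl⟩⟩)
  refine ⟨w1.append (SimpleGraph.Walk.cons hadj w2.reverse), ?_⟩
  rw [SimpleGraph.Walk.length_append, SimpleGraph.Walk.length_cons,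
    SimpleGraph.Walk.length_reverse]
  omega

lemma lift (hD : 3 ≤ D) {v u : V} (w : G.Walk v u) :
    ∃ w' : (HG G ι).Walk (v, ⟨0, by omega⟩) (u, ⟨0, by omega⟩),
      w'.length ≤ (4*D+1) * w.length := by
  induction w with
  | nil => exact ⟨SimpleGraph.Walk.nil, by simp⟩
  | @cons a b c h w ih =>
    obtain ⟨w1, hw1⟩ := edge_walk (ι := ι) hD h
    obtain ⟨w2, hw2⟩ := ih
    refine ⟨w1.append w2, ?_⟩
    rw [SimpleGraph.Walk.length_append, SimpleGraph.Walk.length_cons]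
    have : (4*D+1) * (w.length + 1) = (4*D+1) + (4*D+1) * w.length := by ring
    omega

end Walks

end TrivalentAux

/-- For every `D ≥ 3` there are constants `A ≥ 1` and `B ≥ 0` (depending only
on `D`) such that every finite connected simple graph of maximum degree at most `D` is
`(A,B)`-quasi-isometric to some finite connected trivalent (cubic) simple graph. -/
theorem bounded_valence_graph_quasi_isometric_to_trivalent :
    ∀ D : ℕ, 3 ≤ D →
      ∃ A : ℝ, 1 ≤ A ∧ ∃ B : ℝ, 0 ≤ B ∧
        ∀ (V : Type) [Fintype V] (G : SimpleGraph V),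
          G.Connected → (∀ v : V, (G.neighborSet v).ncard ≤ D) →
          ∃ (W : Type) (_ : Fintype W) (H : SimpleGraph W),
            H.Connected ∧ (∀ w : W, (H.neighborSet w).ncard = 3) ∧
            ∃ f : V → W,
              (∀ x y : V,
                (1 / A) * (G.dist x y : ℝ) - B ≤ (H.dist (f x) (f y) : ℝ) ∧
                (H.dist (f x) (f y) : ℝ) ≤ A * (G.dist x y : ℝ) + B) ∧
              (∀ w : W, ∃ x : V, (H.dist (f x) w : ℝ) ≤ B) := by
  intro D hD
  have hA1 : (1 : ℝ) ≤ ((4*D+1 : ℕ) : ℝ) := by exact_mod_cast (by omega : 1 ≤ 4*D+1)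
  refine ⟨((4*D+1 : ℕ) : ℝ), hA1, ((4*D+1 : ℕ) : ℝ), by linarith, ?_⟩
  intro V _ G hconn hdeg
  classical
  -- choose injective port assignments
  have hι_ex : ∀ v : V, ∃ g : V → Fin D,
      ∀ u u', G.Adj v u → G.Adj v u' → g u = g u' → u = u' := by
    intro v
    have hfin : (G.neighborSet v).Finite := Set.toFinite _
    haveI : Fintype (G.neighborSet v) := hfin.fintype
    have hcard : Fintype.card (G.neighborSet v) ≤ Fintype.card (Fin D) := by
      rw [Fintype.card_fin]
      calc Fintype.card (G.neighborSet v) = (G.neighborSet v).ncard := by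
            rw [Set.ncard_eq_toFinset_card']; simp [Set.toFinset_card]
        _ ≤ D := hdeg v
    obtain ⟨e⟩ := Function.Embedding.nonempty_of_card_le hcard
    refine ⟨fun u => if h : u ∈ G.neighborSet v then e ⟨u, h⟩ else ⟨0, by omega⟩, ?_⟩
    intro u u' hu hu' heq
    simp only at heq
    rw [dif_pos (show u ∈ G.neighborSet v from hu),
      dif_pos (show u' ∈ G.neighborSet v from hu')] at heq
    exact Subtype.ext_iff.mp (e.injective heq)
  choose ι hι using hι_ex
  set H := TrivalentAux.HG G ι with hH
  set z : Fin (2*D) := ⟨0, by omega⟩ with hz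
  -- connectivity
  have hreach0 : ∀ (v : V) (a : Fin (2*D)), H.Reachable (v, z) (v, a) := by
    intro v a
    obtain ⟨w, -⟩ := TrivalentAux.gadget (ι := ι) hD v a
    exact ⟨w⟩
  have hreachz : ∀ v u : V, H.Reachable (v, z) (u, z) := by
    intro v u
    obtain ⟨w⟩ := hconn v u
    obtain ⟨w', -⟩ := TrivalentAux.lift (ι := ι) hD w
    exact ⟨w'⟩
  have HC : H.Connected := by
    have hne : Nonempty V := hconn.nonempty
    obtain ⟨v0⟩ := hne
    rw [SimpleGraph.connected_iff]
    refine ⟨?_, ⟨(v0, z)⟩⟩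
    rintro ⟨v, a⟩ ⟨u, b⟩
    exact ((hreach0 v a).symm.trans (hreachz v u)).trans (hreach0 u b)
  refine ⟨V × Fin (2*D), inferInstance, H, HC, fun w => TrivalentAux.degree_three hι hD w,
    fun x => (x, z), ?_, ?_⟩
  · intro x y
    -- lower bound: G.dist ≤ H.dist
    have hlow : G.dist x y ≤ H.dist (x, z) (y, z) := by
      obtain ⟨w, hw⟩ := (HC.preconnected (x, z) (y, z)).exists_walk_length_eq_dist
      calc G.dist x y ≤ w.length := TrivalentAux.proj hconn w
        _ = _ := hw
    -- upper bound
    have hup : H.dist (x, z) (y, z) ≤ (4*D+1) * G.dist x y := by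
      obtain ⟨w, hw⟩ := (hconn x y).exists_walk_length_eq_dist
      obtain ⟨w', hw'⟩ := TrivalentAux.lift (ι := ι) hD w
      calc H.dist (x, z) (y, z) ≤ w'.length := SimpleGraph.dist_le w'
        _ ≤ (4*D+1) * w.length := hw'
        _ = (4*D+1) * G.dist x y := by rw [hw]
    have hd0 : (0 : ℝ) ≤ (G.dist x y : ℝ) := by positivity
    have hlowR : (G.dist x y : ℝ) ≤ (H.dist (x, z) (y, z) : ℝ) := by exact_mod_cast hlow
    have hupR : (H.dist (x, z) (y, z) : ℝ) ≤ ((4*D+1 : ℕ) : ℝ) * (G.dist x y : ℝ) := by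
      exact_mod_cast hup
    constructor
    · have h1 : (1 / ((4*D+1 : ℕ) : ℝ)) * (G.dist x y : ℝ) ≤ (G.dist x y : ℝ) := by
        have : 1 / ((4*D+1 : ℕ) : ℝ) ≤ 1 := by
          rw [div_le_one (by linarith)]; linarith
        nlinarith
      have hB : (0:ℝ) ≤ ((4*D+1 : ℕ) : ℝ) := by linarith
      linarith
    · linarith
  · rintro ⟨v, a⟩
    refine ⟨v, ?_⟩
    obtain ⟨w, hw⟩ := TrivalentAux.gadget (ι := ι) hD v a
    have : H.dist (v, z) (v, a) ≤ 2*D := le_trans (SimpleGraph.dist_le w) hw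
    have hcast : (H.dist (v, z) (v, a) : ℝ) ≤ ((2*D : ℕ) : ℝ) := by exact_mod_cast this
    have : ((2*D : ℕ) : ℝ) ≤ ((4*D+1 : ℕ) : ℝ) := by exact_mod_cast (by omega : 2*D ≤ 4*D+1)
    linarith
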